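/- Let c = (c_1,…,c_m), d = (d_1,…,d_n) be increasing positive integer sequences, l = max(m,n), h = max(c_m, d_n), x ∈ [l], y ∈ [2,h], and V ⊆ [l] × [2,h]. Let A and B be families of labeled sets (subsets of [l]×[h] with at most one pair per first coordinate, bounded by c resp. d) such that (A ∩ B) \ V ≠ ∅ for all A ∈ A, B ∈ B. Then (C ∩ D) \ (V ∪ {(x,y)}) ≠ ∅ for all C ∈ Γ_{x,y}(A), D ∈ Γ_{x,y}(B), where γ_{x,y}(S) = (S \ {(x,y)}) ∪ {(x,1)} if (x,y) ∈ S, else S, and Γ_{x,y}(F) = {γ_{x,y}(F) : F ∈ F, γ_{x,y}(F) ∉ F} ∪ {F ∈ F : γ_{x,y}(F) ∈ F}. -/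
import Mathlib


def gamma (x y : ℕ) (S : Finset (ℕ × ℕ)) : Finset (ℕ × ℕ) :=
  if (x, y) ∈ S then insert (x, 1) (S.erase (x, y)) else S

def Gamma (x y : ℕ) (F : Finset (Finset (ℕ × ℕ))) : Finset (Finset (ℕ × ℕ)) :=
  (F.filter fun A => gamma x y A ∈ F) ∪
    ((F.filter fun A => gamma x y A ∉ F).image (gamma x y))

/-- `S` is a labeled set in `L_c^{(≤ m)}`: nonempty, entries `(i, a_i)` with
`i ∈ [m]`, `a_i ∈ [c_i]`, at most one pair per first coordinate. -/
def IsLabeled (m : ℕ) (c : ℕ → ℕ) (S : Finset (ℕ × ℕ)) : Prop :=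
  S.Nonempty ∧ (∀ p ∈ S, 1 ≤ p.1 ∧ p.1 ≤ m ∧ 1 ≤ p.2 ∧ p.2 ≤ c p.1) ∧
    ∀ p ∈ S, ∀ q ∈ S, p.1 = q.1 → p = q

lemma gamma_of_mem {x y : ℕ} {S : Finset (ℕ × ℕ)} (h : (x, y) ∈ S) :
    gamma x y S = insert (x, 1) (S.erase (x, y)) := by
  simp [gamma, h]

lemma gamma_of_not_mem {x y : ℕ} {S : Finset (ℕ × ℕ)} (h : (x, y) ∉ S) :
    gamma x y S = S := by
  simp [gamma, h]

lemma mem_Gamma {x y : ℕ} {F : Finset (Finset (ℕ × ℕ))} {C : Finset (ℕ × ℕ)}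
    (hC : C ∈ Gamma x y F) :
    (C ∈ F ∧ gamma x y C ∈ F) ∨
      ∃ S ∈ F, gamma x y S ∉ F ∧ C = gamma x y S := by
  simp only [Gamma, Finset.mem_union, Finset.mem_filter, Finset.mem_image] at hC
  rcases hC with h | ⟨S, ⟨hS1, hS2⟩, hS3⟩
  · exact Or.inl h
  · exact Or.inr ⟨S, hS1, hS2, hS3.symm⟩

theorem stmt11 (m n : ℕ) (hm : 1 ≤ m) (hn : 1 ≤ n) (c d : ℕ → ℕ)
    (hcmono : ∀ i j, 1 ≤ i → i ≤ j → j ≤ m → c i ≤ c j)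
    (hcpos : ∀ i, 1 ≤ i → i ≤ m → 1 ≤ c i)
    (hdmono : ∀ i j, 1 ≤ i → i ≤ j → j ≤ n → d i ≤ d j)
    (hdpos : ∀ i, 1 ≤ i → i ≤ n → 1 ≤ d i)
    (x y : ℕ) (hx : x ∈ Finset.Icc 1 (max m n))
    (hy : y ∈ Finset.Icc 2 (max (c m) (d n)))
    (V : Finset (ℕ × ℕ))
    (hV : V ⊆ Finset.Icc 1 (max m n) ×ˢ Finset.Icc 2 (max (c m) (d n)))
    (A B : Finset (Finset (ℕ × ℕ)))
    (hA : ∀ S ∈ A, IsLabeled m c S) (hB : ∀ S ∈ B, IsLabeled n d S)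
    (hcross : ∀ S ∈ A, ∀ T ∈ B, ((S ∩ T) \ V).Nonempty) :
    ∀ C ∈ Gamma x y A, ∀ D ∈ Gamma x y B,
      ((C ∩ D) \ insert (x, y) V).Nonempty := by
  intro C hC D hD
  have hy2 : 2 ≤ y := (Finset.mem_Icc.mp hy).1
  have hyne : (x, 1) ≠ (x, y) := by
    intro h; have := (Prod.mk.injEq _ _ _ _).mp h; omega
  have hx1V : (x, 1) ∉ V := by
    intro h
    have := (Finset.mem_product.mp (hV h)).2
    have := (Finset.mem_Icc.mp this).1
    omega
  -- (x,y) ∉ gamma x y S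
  have hxy_not : ∀ S : Finset (ℕ × ℕ), (x, y) ∉ gamma x y S → True := fun _ _ => trivial
  have key : ∀ S : Finset (ℕ × ℕ), (x, y) ∈ S → (x, y) ∉ gamma x y S := by
    intro S h
    rw [gamma_of_mem h]
    simp only [Finset.mem_insert, Finset.mem_erase]
    push_neg
    exact ⟨hyne.symm, fun h' => absurd rfl h'⟩
  -- membership in gamma from membership in S, p ≠ (x,y)
  have mem_gamma_of : ∀ (S : Finset (ℕ × ℕ)) (p : ℕ × ℕ), p ∈ S → p ≠ (x, y) →
      p ∈ gamma x y S := by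
    intro S p hp hne
    by_cases h : (x, y) ∈ S
    · rw [gamma_of_mem h]; exact Finset.mem_insert_of_mem (Finset.mem_erase.mpr ⟨hne, hp⟩)
    · rwa [gamma_of_not_mem h]
  -- membership in S from membership in gamma, p ≠ (x,1)
  have mem_of_gamma : ∀ (S : Finset (ℕ × ℕ)) (p : ℕ × ℕ), p ∈ gamma x y S → p ≠ (x, 1) →
      p ∈ S := by
    intro S p hp hne
    by_cases h : (x, y) ∈ S
    · rw [gamma_of_mem h] at hp
      rcases Finset.mem_insert.mp hp with h' | h'
      · exact absurd h' hne
      · exact (Finset.mem_erase.mp h').2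
    · rwa [gamma_of_not_mem h] at hp
  -- labeled sets can't contain both (x,y) and (x,1)
  have lab : ∀ (k : ℕ) (e : ℕ → ℕ) (S : Finset (ℕ × ℕ)), IsLabeled k e S →
      (x, y) ∈ S → (x, 1) ∉ S := by
    intro k e S hS h1 h2
    have := hS.2.2 (x, y) h1 (x, 1) h2 rfl
    exact hyne (this.symm)
  rcases mem_Gamma hC with ⟨hCA, hgCA⟩ | ⟨S, hSA, hgSA, rfl⟩
  · rcases mem_Gamma hD with ⟨hDB, hgDB⟩ | ⟨T, hTB, hgTB, rfl⟩
    · -- C ∈ A, γC ∈ A; D ∈ B, γD ∈ B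
      obtain ⟨p, hp⟩ := hcross C hCA D hDB
      rw [Finset.mem_sdiff, Finset.mem_inter] at hp
      by_cases hpxy : p = (x, y)
      · subst hpxy
        obtain ⟨r, hr⟩ := hcross (gamma x y C) hgCA D hDB
        rw [Finset.mem_sdiff, Finset.mem_inter] at hr
        have hrne : r ≠ (x, y) := fun h => key C hp.1.1 (h ▸ hr.1.1)
        have hr1 : r ≠ (x, 1) := fun h => lab n d D (hB D hDB) hp.1.2 (h ▸ hr.1.2)
        refine ⟨r, ?_⟩
        rw [Finset.mem_sdiff, Finset.mem_inter, Finset.mem_insert]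
        exact ⟨⟨mem_of_gamma C r hr.1.1 hr1, hr.1.2⟩, fun h => h.elim hrne (hr.2 ·)⟩
      · exact ⟨p, by
          rw [Finset.mem_sdiff, Finset.mem_inter, Finset.mem_insert]
          exact ⟨hp.1, fun h => h.elim hpxy (hp.2 ·)⟩⟩
    · -- C ∈ A, γC ∈ A; D = γT, (x,y) ∈ T
      have hxyT : (x, y) ∈ T := by
        by_contra h; exact hgTB (by rw [gamma_of_not_mem h]; exact hTB)
      obtain ⟨p, hp⟩ := hcross C hCA T hTB
      rw [Finset.mem_sdiff, Finset.mem_inter] at hp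
      by_cases hpxy : p = (x, y)
      · subst hpxy
        obtain ⟨r, hr⟩ := hcross (gamma x y C) hgCA T hTB
        rw [Finset.mem_sdiff, Finset.mem_inter] at hr
        have hrne : r ≠ (x, y) := fun h => key C hp.1.1 (h ▸ hr.1.1)
        have hr1 : r ≠ (x, 1) := fun h => lab n d T (hB T hTB) hxyT (h ▸ hr.1.2)
        refine ⟨r, ?_⟩
        rw [Finset.mem_sdiff, Finset.mem_inter, Finset.mem_insert]
        exact ⟨⟨mem_of_gamma C r hr.1.1 hr1, mem_gamma_of T r hr.1.2 hrne⟩,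
          fun h => h.elim hrne (hr.2 ·)⟩
      · exact ⟨p, by
          rw [Finset.mem_sdiff, Finset.mem_inter, Finset.mem_insert]
          exact ⟨⟨hp.1.1, mem_gamma_of T p hp.1.2 hpxy⟩, fun h => h.elim hpxy (hp.2 ·)⟩⟩
  · have hxyS : (x, y) ∈ S := by
      by_contra h; exact hgSA (by rw [gamma_of_not_mem h]; exact hSA)
    rcases mem_Gamma hD with ⟨hDB, hgDB⟩ | ⟨T, hTB, hgTB, rfl⟩
    · -- C = γS, (x,y) ∈ S; D ∈ B, γD ∈ B
      obtain ⟨p, hp⟩ := hcross S hSA D hDB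
      rw [Finset.mem_sdiff, Finset.mem_inter] at hp
      by_cases hpxy : p = (x, y)
      · subst hpxy
        obtain ⟨r, hr⟩ := hcross S hSA (gamma x y D) hgDB
        rw [Finset.mem_sdiff, Finset.mem_inter] at hr
        have hrne : r ≠ (x, y) := fun h => key D hp.1.2 (h ▸ hr.1.2)
        have hr1 : r ≠ (x, 1) := fun h => lab m c S (hA S hSA) hxyS (h ▸ hr.1.1)
        refine ⟨r, ?_⟩
        rw [Finset.mem_sdiff, Finset.mem_inter, Finset.mem_insert]
        exact ⟨⟨mem_gamma_of S r hr.1.1 hrne, mem_of_gamma D r hr.1.2 hr1⟩,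
          fun h => h.elim hrne (hr.2 ·)⟩
      · exact ⟨p, by
          rw [Finset.mem_sdiff, Finset.mem_inter, Finset.mem_insert]
          exact ⟨⟨mem_gamma_of S p hp.1.1 hpxy, hp.1.2⟩, fun h => h.elim hpxy (hp.2 ·)⟩⟩
    · -- C = γS, D = γT, both contain (x,y): use (x,1)
      have hxyT : (x, y) ∈ T := by
        by_contra h; exact hgTB (by rw [gamma_of_not_mem h]; exact hTB)
      refine ⟨(x, 1), ?_⟩
      rw [Finset.mem_sdiff, Finset.mem_inter, Finset.mem_insert]
      refine ⟨⟨?_, ?_⟩, fun h => h.elim hyne hx1V⟩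
      · rw [gamma_of_mem hxyS]; exact Finset.mem_insert_self _ _
      · rw [gamma_of_mem hxyT]; exact Finset.mem_insert_self _ _
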